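/- Let f : X → Y be a flat morphism of schemes with Y integral. If there exists a dense open subset U ⊆ Y such that f⁻¹(U) is integral, then X is integral. -/

import Mathlib

open AlgebraicGeometry CategoryTheory TopologicalSpace

/-- A morphism of schemes is flat if it is flat on all stalks. -/
def SchemeHomFlat {X Y : AlgebraicGeometry.Scheme} (f : X ⟶ Y) : Prop :=
  ∀ x : X, letI := ((f.stalkMap x).hom : _ →+* _).toAlgebra
    Module.Flat (Y.presheaf.stalk (f.base x)) (X.presheaf.stalk x)

open TensorProduct in
lemma isSMulRegular_of_flat {R M : Type*} [CommRing R] [AddCommGroup M] [Module R M]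
    [Module.Flat R M] {r : R} (h : IsSMulRegular R r) : IsSMulRegular M r := by
  have H : IsSMulRegular (M ⊗[R] R) r := h.lTensor M
  intro u v huv
  have h2 : r • (TensorProduct.rid R M).symm u = r • (TensorProduct.rid R M).symm v := by
    rw [← map_smul, ← map_smul]
    exact congrArg _ huv
  simpa using congrArg (TensorProduct.rid R M) (H h2)

lemma germ_eq_zero_of_pow_mul_eq_zero {X Y : AlgebraicGeometry.Scheme} (f : X ⟶ Y)
    (hf : SchemeHomFlat f) [IsIntegral Y]
    {W' : Y.Opens} {V' : X.Opens} (e : V' ≤ f ⁻¹ᵁ W')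
    {a : Γ(Y, W')} (ha : a ≠ 0) (b : Γ(X, V')) (n : ℕ)
    (hab : f.appLE W' V' e a ^ n * b = 0)
    (x : X) (hx : x ∈ V') :
    X.presheaf.germ V' x hx b = 0 := by
  have hy : f.base x ∈ W' := e hx
  haveI : Nonempty W' := ⟨⟨_, hy⟩⟩
  letI := ((f.stalkMap x).hom : _ →+* _).toAlgebra
  haveI := hf x
  haveI : IsDomain (Y.presheaf.stalk (f.base x)) :=
    Function.Injective.isDomain (algebraMap (Y.presheaf.stalk (f.base x)) Y.functionField)
      (IsFractionRing.injective _ _)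
  set α : Y.presheaf.stalk (f.base x) := Y.presheaf.germ W' (f.base x) hy a with hα
  have hαn : α ^ n ≠ 0 := fun h0 => pow_ne_zero n ha <|
    AlgebraicGeometry.germ_injective_of_isIntegral Y (f.base x) hy
      (by rw [map_pow, map_zero]; exact h0)
  have hreg : IsSMulRegular (X.presheaf.stalk x) (α ^ n) :=
    isSMulRegular_of_flat
      (fun u v huv => mul_left_cancel₀ hαn (by simpa [smul_eq_mul] using huv))
  refine hreg ?_
  show α ^ n • (X.presheaf.germ V' x hx) b = α ^ n • 0
  rw [smul_zero, Algebra.smul_def, RingHom.algebraMap_toAlgebra, map_pow]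
  have key : (f.stalkMap x) α = X.presheaf.germ V' x hx (f.appLE W' V' e a) := by
    rw [hα, AlgebraicGeometry.Scheme.Hom.germ_stalkMap_apply f W' x hy a]
    exact (X.presheaf.germ_res_apply (homOfLE e) x hx (f.app W' a)).symm
  rw [key, ← map_pow, ← map_mul, hab, map_zero]

lemma setup_key {X Y : AlgebraicGeometry.Scheme} (f : X ⟶ Y)
    (hf : SchemeHomFlat f) [IsIntegral Y]
    (U : Y.Opens) (hU : Dense (U : Set Y))
    (hred : ∀ D : X.Opens, D ≤ f ⁻¹ᵁ U → IsReduced Γ(X, D))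
    {V' : X.Opens} (hV' : IsAffineOpen V') {x : X} (hx : x ∈ V')
    {W' : Y.Opens} (hW' : IsAffineOpen W') (e : V' ≤ f ⁻¹ᵁ W') :
    (∀ b : Γ(X, V'), IsNilpotent b → X.presheaf.germ V' x hx b = 0) ∧
      ((↑(f ⁻¹ᵁ U) ∩ ↑V' : Set X)).Nonempty := by
  obtain ⟨z, hzW', hzU⟩ := hU.inter_open_nonempty ↑W' W'.isOpen ⟨f.base x, e hx⟩
  obtain ⟨a, hale, hza⟩ := hW'.exists_basicOpen_le (V := U ⊓ W') ⟨z, hzU, hzW'⟩ hzW'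
  have ha : a ≠ 0 := by
    rintro rfl
    simp only [map_zero] at hza
    simpa using hza
  set φa := f.appLE W' V' e a with hφa
  set D := X.basicOpen φa with hD
  have hDle : D ≤ f ⁻¹ᵁ U ⊓ V' := by
    refine le_inf ?_ (X.basicOpen_le φa)
    have h1 : D = V' ⊓ X.basicOpen (f.app W' a) := by
      rw [hD, hφa, Scheme.Hom.appLE]
      exact Scheme.basicOpen_res _ _ _
    rw [h1, ← Scheme.preimage_basicOpen]
    exact le_trans inf_le_right (le_trans (by exact fun p hp => (hale hp).1) le_rfl)
  letI := hV'.isLocalization_basicOpen φa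
  haveI : IsReduced Γ(X, D) := hred D (hDle.trans inf_le_left)
  have cancel : ∀ b : Γ(X, V'),
      algebraMap Γ(X, V') Γ(X, D) b = 0 → X.presheaf.germ V' x hx b = 0 := by
    intro b hb
    obtain ⟨⟨c, m, rfl⟩, hc⟩ :=
      (IsLocalization.map_eq_zero_iff (Submonoid.powers φa) Γ(X, D) b).mp hb
    exact germ_eq_zero_of_pow_mul_eq_zero f hf e ha b m hc x hx
  constructor
  · intro b hb
    exact cancel b ((hb.map (algebraMap Γ(X, V') Γ(X, D))).eq_zero)
  · by_contra hne
    have hsub : (D : Set X) ⊆ (↑(f ⁻¹ᵁ U) ∩ ↑V' : Set X) := fun p hp =>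
      ⟨(hDle hp).1, (hDle hp).2⟩
    have hDbot : D = ⊥ := by
      apply SetLike.ext'
      rw [Opens.coe_bot]
      exact Set.eq_empty_iff_forall_notMem.mpr fun p hp => hne ⟨p, hsub hp⟩
    haveI : Subsingleton Γ(X, D) :=
      CommRingCat.subsingleton_of_isTerminal (X.sheaf.isTerminalOfEqEmpty hDbot)
    have h1 := cancel 1 (Subsingleton.elim _ _)
    rw [map_one] at h1
    exact one_ne_zero h1

theorem flat_pullback_integral
    {X Y : AlgebraicGeometry.Scheme} (f : X ⟶ Y)
    (hf : SchemeHomFlat f) [IsIntegral Y]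
    (U : Y.Opens) (hU : Dense (U : Set Y))
    (hpre : IsIntegral ((f ⁻¹ᵁ U).toScheme)) :
    IsIntegral X := by
  haveI := hpre
  haveI : IsReduced (f ⁻¹ᵁ U).toScheme := inferInstance
  -- reducedness of sections over opens inside the preimage of U
  have hred : ∀ D : X.Opens, D ≤ f ⁻¹ᵁ U → IsReduced Γ(X, D) := by
    intro D hD
    have hD' : (f ⁻¹ᵁ U).ι ''ᵁ ((f ⁻¹ᵁ U).ι ⁻¹ᵁ D) = D := by
      apply SetLike.ext'
      change (f ⁻¹ᵁ U).ι.base '' ((f ⁻¹ᵁ U).ι.base ⁻¹' D) = D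
      rw [Set.image_preimage_eq_inter_range, Scheme.Opens.range_ι]
      exact Set.inter_eq_self_of_subset_left hD
    obtain ⟨D₀, rfl⟩ : ∃ D₀, (f ⁻¹ᵁ U).ι ''ᵁ D₀ = D := ⟨_, hD'⟩
    haveI : IsReduced Γ((f ⁻¹ᵁ U).toScheme, D₀) := inferInstance
    exact isReduced_of_injective ((f ⁻¹ᵁ U).ι.appIso D₀).hom.hom
      ((f ⁻¹ᵁ U).ι.appIso D₀).commRingCatIsoToRingEquiv.injective
  -- existence of suitable affine pairs
  have pairs : ∀ (x : X) (V : X.Opens), x ∈ V → ∃ (V' : X.Opens) (W' : Y.Opens),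
      IsAffineOpen V' ∧ IsAffineOpen W' ∧ x ∈ V' ∧ V' ≤ V ∧ V' ≤ f ⁻¹ᵁ W' := by
    intro x V hxV
    obtain ⟨_, ⟨W', hW', rfl⟩, h1, -⟩ := Y.isBasis_affineOpens.exists_subset_of_mem_open
      (Set.mem_univ (f.base x)) isOpen_univ
    obtain ⟨_, ⟨V', hV', rfl⟩, hxV', hsub⟩ := X.isBasis_affineOpens.exists_subset_of_mem_open
      (show x ∈ ↑(V ⊓ f ⁻¹ᵁ W') from ⟨hxV, h1⟩) (V ⊓ f ⁻¹ᵁ W').isOpen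
    exact ⟨V', W', hV', hW', hxV', fun p hp => (hsub hp).1, fun p hp => (hsub hp).2⟩
  -- density of the preimage of U
  have hdense : Dense (↑(f ⁻¹ᵁ U) : Set X) := by
    rw [dense_iff_inter_open]
    rintro V hV ⟨x, hxV⟩
    obtain ⟨V', W', hV', hW', hxV', hVle, e⟩ := pairs x ⟨V, hV⟩ hxV
    obtain ⟨-, w, hw1, hw2⟩ := setup_key f hf U hU hred hV' hxV' hW' e
    exact ⟨w, hVle hw2, hw1⟩
  haveI : IrreducibleSpace X := by
    have h1 : IsIrreducible (↑(f ⁻¹ᵁ U) : Set X) := by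
      rw [← Scheme.Opens.range_ι, ← Set.image_univ]
      exact IsIrreducible.image (IrreducibleSpace.isIrreducible_univ _) _
        ((f ⁻¹ᵁ U).ι.base.hom.continuous.continuousOn)
    have h2 := h1.closure
    rw [hdense.closure_eq] at h2
    exact { isPreirreducible_univ := h2.2, toNonempty := let ⟨p, _⟩ := h2.1; ⟨p⟩ }
  haveI : ∀ x : X, IsReduced (X.presheaf.stalk x) := by
    intro x
    constructor
    intro g hg
    obtain ⟨V₀, hx₀, s, rfl⟩ := X.presheaf.germ_exist (x := x) g
    obtain ⟨k, hk⟩ := hg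
    have hk' : X.presheaf.germ V₀ x hx₀ (s ^ k) = X.presheaf.germ V₀ x hx₀ 0 := by
      rw [map_pow, map_zero, hk]
    obtain ⟨V₁, hx₁, i₁, i₂, hres⟩ := X.presheaf.germ_eq x hx₀ hx₀ _ _ hk'
    rw [map_zero] at hres
    obtain ⟨V', W', hV', hW', hxV', hVle, e⟩ := pairs x V₁ hx₁
    set b : Γ(X, V') := X.presheaf.map (homOfLE (hVle.trans i₁.le)).op s with hb
    have hbnil : IsNilpotent b := by
      refine ⟨k, ?_⟩
      have : (homOfLE (hVle.trans i₁.le) : V' ⟶ V₀) = homOfLE hVle ≫ i₁ := rfl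
      rw [hb, ← map_pow, this, op_comp, X.presheaf.map_comp]
      change X.presheaf.map _ (X.presheaf.map i₁.op (s ^ k)) = 0
      rw [hres, map_zero]
    obtain ⟨hvanish, -⟩ := setup_key f hf U hU hred hV' hxV' hW' e
    have h0 := hvanish b hbnil
    rw [hb, X.presheaf.germ_res_apply (homOfLE (hVle.trans i₁.le)) x hxV' s] at h0
    exact h0
  haveI : IsReduced X := isReduced_of_isReduced_stalk X
  exact isIntegral_of_irreducibleSpace_of_isReduced X
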